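/- Let H be a real Hilbert space, let α > 0, let (W_n) be a sequence of bounded self-adjoint operators with W_n ≽ α·Id and sup_n ‖W_n‖ < ∞, let C be a nonempty subset of H, and let (x_n) be a sequence in H such that there exist summable nonnegative sequences (η_n) and, for each z ∈ C, (ε_n), with ‖x_{n+1} − z‖²_{W_{n+1}} ≤ (1+η_n)‖x_n − z‖²_{W_n} + ε_n for all n. Then (x_n) is bounded and, for every z ∈ C, the sequence (‖x_n − z‖_{W_n}) converges. -/

import Mathlib

open Filter Finset

lemma quasi_fejer (a η ε : ℕ → ℝ) (ha : ∀ n, 0 ≤ a n)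
    (hη : ∀ n, 0 ≤ η n) (hηs : Summable η)
    (hε : ∀ n, 0 ≤ ε n) (hεs : Summable ε)
    (hrec : ∀ n, a (n + 1) ≤ (1 + η n) * a n + ε n) :
    (∃ M, ∀ n, a n ≤ M) ∧ ∃ l, Tendsto a atTop (nhds l) := by
  set P : ℕ → ℝ := fun n => ∏ k ∈ Finset.range n, (1 + η k) with hPdef
  have hP1 : ∀ n, 1 ≤ P n := by
    intro n
    show (1:ℝ) ≤ ∏ k ∈ Finset.range n, (1 + η k)
    induction n with
    | zero => simp
    | succ m ih => rw [Finset.prod_range_succ]; nlinarith [hη m]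
  have hPpos : ∀ n, 0 < P n := fun n => lt_of_lt_of_le one_pos (hP1 n)
  have hPsucc : ∀ n, P (n + 1) = P n * (1 + η n) := fun n => Finset.prod_range_succ _ _
  have hPmono : Monotone P := monotone_nat_of_le_succ (fun n => by
    have := hPpos n; have := hη n; rw [hPsucc]; nlinarith)
  have hPbdd : ∀ n, P n ≤ Real.exp (∑' k, η k) := by
    intro n
    calc P n ≤ ∏ k ∈ Finset.range n, Real.exp (η k) :=
          Finset.prod_le_prod (fun k _ => by linarith [hη k])
            (fun k _ => by linarith [Real.add_one_le_exp (η k)])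
      _ = Real.exp (∑ k ∈ Finset.range n, η k) := (Real.exp_sum _ _).symm
      _ ≤ Real.exp (∑' k, η k) := Real.exp_le_exp.mpr (Summable.sum_le_tsum _ (fun k _ => hη k) hηs)
  set ε' : ℕ → ℝ := fun n => ε n / P (n + 1) with hε'def
  have hε'0 : ∀ n, 0 ≤ ε' n := fun n => div_nonneg (hε n) (hPpos _).le
  have hε'le : ∀ n, ε' n ≤ ε n := fun n => by
    rw [hε'def, div_le_iff₀ (hPpos _)]; nlinarith [hε n, hP1 (n + 1)]
  have hε's : Summable ε' := hεs.of_nonneg_of_le hε'0 hε'le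
  set S : ℕ → ℝ := fun n => ∑ k ∈ Finset.range n, ε' k with hSdef
  have hSle : ∀ n, S n ≤ ∑' k, ε' k := fun n => Summable.sum_le_tsum _ (fun k _ => hε'0 k) hε's
  have hSlim : Tendsto S atTop (nhds (∑' k, ε' k)) := hε's.hasSum.tendsto_sum_nat
  set b : ℕ → ℝ := fun n => a n / P n - S n with hbdef
  have hstep : ∀ n, a (n + 1) / P (n + 1) ≤ a n / P n + ε' n := by
    intro n
    have h1 : (a n / P n + ε' n) * P (n + 1) = (1 + η n) * a n + ε n := by
      have he : ε' n = ε n / P (n + 1) := rfl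
      have h2 : (0:ℝ) < 1 + η n := by have := hη n; linarith
      rw [he, hPsucc]
      field_simp [(hPpos n).ne', h2.ne']
    rw [div_le_iff₀ (hPpos _), h1]
    exact hrec n
  have hanti : Antitone b := antitone_nat_of_succ_le (fun n => by
    have h0 := hstep n
    have hS1 : S (n + 1) = S n + ε' n := Finset.sum_range_succ _ _
    have h2 : b (n + 1) = a (n + 1) / P (n + 1) - S (n + 1) := rfl
    have h3 : b n = a n / P n - S n := rfl
    rw [h2, h3, hS1]
    linarith)
  have hblb : ∀ n, -(∑' k, ε' k) ≤ b n := fun n => by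
    have h1 : 0 ≤ a n / P n := div_nonneg (ha n) (hPpos n).le
    have := hSle n
    simp only [hbdef]; linarith
  -- bound on a
  have hq : ∀ n, a n / P n ≤ b 0 + ∑' k, ε' k := fun n => by
    have h1 := hanti (Nat.zero_le n)
    have h2 := hSle n
    simp only [hbdef] at h1 ⊢
    linarith
  have hq0 : 0 ≤ b 0 + ∑' k, ε' k := le_trans (div_nonneg (ha 0) (hPpos 0).le) (hq 0)
  constructor
  · refine ⟨(b 0 + ∑' k, ε' k) * Real.exp (∑' k, η k), fun n => ?_⟩
    have : a n = a n / P n * P n := (div_mul_cancel₀ _ (hPpos n).ne').symm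
    rw [this]
    exact mul_le_mul (hq n) (hPbdd n) (hPpos n).le hq0
  -- convergence
  · have hblim : Tendsto b atTop (nhds (⨅ n, b n)) :=
      tendsto_atTop_ciInf hanti ⟨-(∑' k, ε' k), fun y ⟨n, hn⟩ => hn ▸ hblb n⟩
    have hPlim : Tendsto P atTop (nhds (⨆ n, P n)) :=
      tendsto_atTop_ciSup hPmono ⟨Real.exp (∑' k, η k), fun y ⟨n, hn⟩ => hn ▸ hPbdd n⟩
    refine ⟨((⨅ n, b n) + ∑' k, ε' k) * (⨆ n, P n), ?_⟩
    have h1 : Tendsto (fun n => (b n + S n) * P n) atTop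
        (nhds (((⨅ n, b n) + ∑' k, ε' k) * (⨆ n, P n))) :=
      (hblim.add hSlim).mul hPlim
    refine h1.congr (fun n => ?_)
    have h3 : b n = a n / P n - S n := rfl
    rw [h3]
    field_simp
    rw [sub_add_cancel]; field_simp [(hPpos n).ne']

open RealInnerProductSpace

theorem stmt_15 {H : Type*} [NormedAddCommGroup H] [InnerProductSpace ℝ H] [CompleteSpace H]
    (α : ℝ) (hα : 0 < α)
    (W : ℕ → H →L[ℝ] H) (hW : ∀ n, IsSelfAdjoint (W n))
    (hWα : ∀ n, ∀ x : H, α * ‖x‖ ^ 2 ≤ ⟪W n x, x⟫)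
    (hWbdd : ∃ μ : ℝ, ∀ n, ‖W n‖ ≤ μ)
    (C : Set H) (hC : C.Nonempty)
    (x : ℕ → H)
    (hfejer : ∃ η : ℕ → ℝ, (∀ n, 0 ≤ η n) ∧ Summable η ∧
      ∀ z ∈ C, ∃ ε : ℕ → ℝ, (∀ n, 0 ≤ ε n) ∧ Summable ε ∧
        ∀ n, ⟪W (n + 1) (x (n + 1) - z), x (n + 1) - z⟫ ≤
          (1 + η n) * ⟪W n (x n - z), x n - z⟫ + ε n) :
    (∃ M : ℝ, ∀ n, ‖x n‖ ≤ M) ∧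
    ∀ z ∈ C, ∃ l : ℝ,
      Filter.Tendsto (fun n => Real.sqrt ⟪W n (x n - z), x n - z⟫) Filter.atTop (nhds l) := by
  obtain ⟨η, hη0, hηs, hηrec⟩ := hfejer
  have key : ∀ z ∈ C, (∃ M, ∀ n, ⟪W n (x n - z), x n - z⟫ ≤ M) ∧
      ∃ l, Tendsto (fun n => ⟪W n (x n - z), x n - z⟫) atTop (nhds l) := by
    intro z hz
    obtain ⟨ε, hε0, hεs, hrec⟩ := hηrec z hz
    have ha : ∀ n, 0 ≤ ⟪W n (x n - z), x n - z⟫ := fun n =>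
      le_trans (by positivity) (hWα n (x n - z))
    exact quasi_fejer (fun n => ⟪W n (x n - z), x n - z⟫) η ε ha hη0 hηs hε0 hεs hrec
  constructor
  · obtain ⟨z₀, hz₀⟩ := hC
    obtain ⟨⟨M, hM⟩, -⟩ := key z₀ hz₀
    refine ⟨Real.sqrt (M / α) + ‖z₀‖, fun n => ?_⟩
    have h1 : α * ‖x n - z₀‖ ^ 2 ≤ M := le_trans (hWα n (x n - z₀)) (hM n)
    have h2 : ‖x n - z₀‖ ≤ Real.sqrt (M / α) := by
      rw [show Real.sqrt (M / α) = Real.sqrt (M / α) from rfl]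
      rw [← Real.sqrt_sq (norm_nonneg (x n - z₀))]
      apply Real.sqrt_le_sqrt
      rw [le_div_iff₀ hα]
      linarith
    calc ‖x n‖ = ‖(x n - z₀) + z₀‖ := by rw [sub_add_cancel]
      _ ≤ ‖x n - z₀‖ + ‖z₀‖ := norm_add_le _ _
      _ ≤ Real.sqrt (M / α) + ‖z₀‖ := by linarith
  · intro z hz
    obtain ⟨-, l, hl⟩ := key z hz
    exact ⟨Real.sqrt l, (Real.continuous_sqrt.tendsto l).comp hl⟩
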